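/- For 0<|q|<1, 0<|p|<1, |x|<1, |y|<1: Ψ₁(q^a,p^b;p^c,q^d;q,p,x,y) = Σ_{ℓ≥0} [(q^a;q)_ℓ(p^b;p)_ℓ / ((p^c;p)_ℓ(p;p)_ℓ)]·y^ℓ · ₂φ₁(q^{a+ℓ},0;q^d;q,x), where ₂φ₁(q^α,0;q^γ;q,x) = Σ_{k≥0} (q^α;q)_k / ((q^γ;q)_k(q;q)_k) x^k. -/

import Mathlib

open scoped BigOperators
open Filter

/-- q-shifted factorial `(z;q)_k`. -/
noncomputable def qPoch (q z : ℂ) (k : ℕ) : ℂ :=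
  ∏ r ∈ Finset.range k, (1 - z * q ^ r)

/-- infinite q-shifted factorial `(z;q)_∞`. -/
noncomputable def qPochInf (q z : ℂ) : ℂ := ∏' r : ℕ, (1 - z * q ^ r)

/-- bibasic Humbert function `Ψ₁(A,B;C,D;q,p,x,y)` with `A=qᵃ, B=pᵇ, C=pᶜ, D=q^d`. -/
noncomputable def Psi1 (q p A B C D x y : ℂ) : ℂ :=
  ∑' kl : ℕ × ℕ,
    qPoch q A (kl.1 + kl.2) * qPoch p B kl.2 /
      (qPoch p C kl.2 * qPoch q D kl.1 * qPoch q q kl.1 * qPoch p p kl.2) *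
      x ^ kl.1 * y ^ kl.2

/-- bibasic Humbert function `Ψ₂(A;B,C;q,p,x,y)` with `A=qᵃ, B=pᵇ, C=qᶜ`. -/
noncomputable def Psi2 (q p A B C x y : ℂ) : ℂ :=
  ∑' kl : ℕ × ℕ,
    qPoch q A (kl.1 + kl.2) /
      (qPoch p B kl.2 * qPoch q C kl.1 * qPoch q q kl.1 * qPoch p p kl.2) *
      x ^ kl.1 * y ^ kl.2

/-- the q-difference operator `D_{x,q}`. -/
noncomputable def qDiff (q : ℂ) (f : ℂ → ℂ) : ℂ → ℂ :=
  fun x => (f x - f (q * x)) / ((1 - q) * x)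

/-- basic hypergeometric series `₂φ₁(A,B;C;q,x)`. -/
noncomputable def phi21 (q A B C x : ℂ) : ℂ :=
  ∑' k : ℕ, qPoch q A k * qPoch q B k / (qPoch q C k * qPoch q q k) * x ^ k

/-- basic confluent hypergeometric series `₁φ₁(A;C;q,z)`. -/
noncomputable def phi11 (q A C z : ℂ) : ℂ :=
  ∑' k : ℕ, qPoch q A k / (qPoch q C k * qPoch q q k) *
    (-1) ^ k * q ^ (k * (k - 1) / 2) * z ^ k

lemma qPoch_add (q z : ℂ) (m n : ℕ) :
    qPoch q z (m + n) = qPoch q z m * qPoch q (z * q ^ m) n := by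
  rw [qPoch, Finset.prod_range_add]
  refine congrArg _ (Finset.prod_congr rfl fun r _ => ?_)
  rw [pow_add]; ring

lemma qPoch_zero (q : ℂ) (k : ℕ) : qPoch q 0 k = 1 := by simp [qPoch]

lemma weier (t : ℕ → ℝ) (h0 : ∀ r, 0 ≤ t r) (h1 : ∀ r, t r ≤ 1) (m : ℕ) :
    1 - ∑ r ∈ Finset.range m, t r ≤ ∏ r ∈ Finset.range m, (1 - t r) := by
  induction m with
  | zero => simp
  | succ n ih =>
    rw [Finset.prod_range_succ, Finset.sum_range_succ]
    have hP : ∏ r ∈ Finset.range n, (1 - t r) ≤ 1 := by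
      calc ∏ r ∈ Finset.range n, (1 - t r) ≤ ∏ r ∈ Finset.range n, 1 :=
            Finset.prod_le_prod (fun r _ => by linarith [h0 r, h1 r]) (fun r _ => by linarith [h0 r])
        _ = 1 := by simp
    have hPn : 0 ≤ ∏ r ∈ Finset.range n, (1 - t r) :=
      Finset.prod_nonneg fun r _ => by linarith [h1 r]
    nlinarith [h0 n, h1 n]

lemma qPoch_abs (q z : ℂ) (k : ℕ) :
    ‖qPoch q z k‖ = ∏ r ∈ Finset.range k, ‖1 - z * q ^ r‖ := by
  rw [qPoch]; exact norm_prod _ _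

lemma qPoch_upper (q z : ℂ) (hq1 : ‖q‖ < 1) :
    ∃ M : ℝ, 0 ≤ M ∧ ∀ k, ‖qPoch q z k‖ ≤ M := by
  refine ⟨Real.exp (‖z‖ * (1 - ‖q‖)⁻¹), (Real.exp_pos _).le, fun k => ?_⟩
  rw [qPoch_abs]
  have h1 : ∀ r ∈ Finset.range k, ‖1 - z * q ^ r‖
      ≤ Real.exp (‖z‖ * ‖q‖ ^ r) := by
    intro r _
    calc ‖1 - z * q ^ r‖ ≤ 1 + ‖z‖ * ‖q‖ ^ r := by
          have h := norm_sub_le (1:ℂ) (z * q ^ r)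
          simpa [norm_mul, norm_pow] using h
      _ ≤ Real.exp (‖z‖ * ‖q‖ ^ r) := by
          have := Real.add_one_le_exp (‖z‖ * ‖q‖ ^ r); linarith
  calc (∏ r ∈ Finset.range k, ‖1 - z * q ^ r‖)
      ≤ ∏ r ∈ Finset.range k, Real.exp (‖z‖ * ‖q‖ ^ r) :=
        Finset.prod_le_prod (fun r _ => norm_nonneg _) h1
    _ = Real.exp (∑ r ∈ Finset.range k, ‖z‖ * ‖q‖ ^ r) :=
        (Real.exp_sum _ _).symm
    _ ≤ Real.exp (‖z‖ * (1 - ‖q‖)⁻¹) := by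
        apply Real.exp_le_exp.2
        rw [← Finset.mul_sum]
        have hs : ∑ r ∈ Finset.range k, ‖q‖ ^ r ≤ (1 - ‖q‖)⁻¹ := by
          rw [← tsum_geometric_of_lt_one (norm_nonneg _) hq1]
          exact Summable.sum_le_tsum _ (fun i _ => pow_nonneg (norm_nonneg _) _)
            (summable_geometric_of_lt_one (norm_nonneg _) hq1)
        exact mul_le_mul_of_nonneg_left hs (norm_nonneg _)

lemma qPoch_half (q w : ℂ) (hq1 : ‖q‖ < 1)
    (hw : ‖w‖ * (1 - ‖q‖)⁻¹ ≤ 1 / 2) (m : ℕ) :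
    (1:ℝ) / 2 ≤ ‖qPoch q w m‖ := by
  have hq0 : (0:ℝ) < 1 - ‖q‖ := by linarith
  have hinv : (1:ℝ) ≤ (1 - ‖q‖)⁻¹ := by
    have h1 : (1 - ‖q‖) * (1 - ‖q‖)⁻¹ = 1 := mul_inv_cancel₀ hq0.ne'
    nlinarith [inv_pos.2 hq0, norm_nonneg q]
  have hw2 : ‖w‖ ≤ 1 / 2 := by
    calc ‖w‖ = ‖w‖ * 1 := (mul_one _).symm
      _ ≤ ‖w‖ * (1 - ‖q‖)⁻¹ :=
          mul_le_mul_of_nonneg_left hinv (norm_nonneg _)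
      _ ≤ 1 / 2 := hw
  set t : ℕ → ℝ := fun r => ‖w‖ * ‖q‖ ^ r with ht
  have ht0 : ∀ r, 0 ≤ t r := fun r =>
    mul_nonneg (norm_nonneg _) (pow_nonneg (norm_nonneg _) _)
  have ht1 : ∀ r, t r ≤ 1 := by
    intro r
    have h1 : ‖q‖ ^ r ≤ 1 := pow_le_one₀ (norm_nonneg _) hq1.le
    calc t r ≤ ‖w‖ * 1 := mul_le_mul_of_nonneg_left h1 (norm_nonneg _)
      _ ≤ 1 := by linarith
  have hsum : ∑ r ∈ Finset.range m, t r ≤ 1 / 2 := by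
    calc ∑ r ∈ Finset.range m, t r
        ≤ ∑' r : ℕ, t r := Summable.sum_le_tsum _ (fun i _ => ht0 i)
          ((summable_geometric_of_lt_one (norm_nonneg _) hq1).mul_left _)
      _ = ‖w‖ * (1 - ‖q‖)⁻¹ := by
          rw [ht]; rw [tsum_mul_left, tsum_geometric_of_lt_one (norm_nonneg _) hq1]
      _ ≤ 1 / 2 := hw
  have hmain : 1 - ∑ r ∈ Finset.range m, t r ≤ ‖qPoch q w m‖ := by
    rw [qPoch_abs]
    refine le_trans (weier t ht0 ht1 m) (Finset.prod_le_prod (fun r _ => by linarith [ht1 r])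
      (fun r _ => ?_))
    have := norm_sub_le (1 : ℂ) (w * q ^ r)
    have h2 : (1:ℝ) - ‖w * q ^ r‖ ≤ ‖1 - w * q ^ r‖ := by
      have := norm_sub_norm_le (1 : ℂ) (w * q ^ r)
      simpa using this
    simpa [ht, norm_mul, norm_pow] using h2
  linarith

lemma qPoch_lower (q z : ℂ) (hq1 : ‖q‖ < 1) :
    ∃ c : ℝ, 0 < c ∧ ∀ k, qPoch q z k = 0 ∨ c ≤ ‖qPoch q z k‖ := by
  have hq0 : (0:ℝ) < 1 - ‖q‖ := by linarith
  -- choose N with |z| |q|^N (1-|q|)⁻¹ ≤ 1/2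
  obtain ⟨N, hN⟩ : ∃ N : ℕ, ‖z‖ * ‖q‖ ^ N * (1 - ‖q‖)⁻¹ ≤ 1/2 := by
    have h := tendsto_pow_atTop_nhds_zero_of_lt_one (norm_nonneg q) hq1
    have hc : (0:ℝ) < (1/2) / ((‖z‖ + 1) * (1 - ‖q‖)⁻¹) := by
      apply div_pos (by norm_num)
      exact mul_pos (by linarith [norm_nonneg z]) (inv_pos.2 hq0)
    obtain ⟨N, hN⟩ := (h.eventually (eventually_le_nhds hc)).exists
    refine ⟨N, ?_⟩
    have h1 : ‖z‖ * ‖q‖ ^ N * (1 - ‖q‖)⁻¹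
        ≤ (‖z‖ + 1) * (1 - ‖q‖)⁻¹ * ‖q‖ ^ N := by
      ring_nf; nlinarith [norm_nonneg z, inv_pos.2 hq0,
        pow_nonneg (norm_nonneg q) N]
    have hEpos : (0:ℝ) < (‖z‖ + 1) * (1 - ‖q‖)⁻¹ :=
      mul_pos (by linarith [norm_nonneg z]) (inv_pos.2 hq0)
    rw [le_div_iff₀ hEpos] at hN
    nlinarith
  set w : ℂ := z * q ^ N with hwdef
  have hwhalf : ∀ m, (1:ℝ)/2 ≤ ‖qPoch q w m‖ := by
    refine qPoch_half q w hq1 ?_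
    simpa [hwdef, norm_mul, norm_pow] using hN
  -- finite min over k ≤ N of nonzero values
  set g : ℕ → ℝ := fun k => if qPoch q z k = 0 then 1 else ‖qPoch q z k‖ with hg
  have hgpos : ∀ k, 0 < g k := by
    intro k; rw [hg]; dsimp only
    split
    · norm_num
    · next h => exact norm_pos_iff.2 h
  have hne : (Finset.range (N+1)).Nonempty := ⟨0, by simp⟩
  set c0 : ℝ := (Finset.range (N+1)).inf' hne g with hc0
  have hc0pos : 0 < c0 := by
    rw [hc0, Finset.lt_inf'_iff]
    exact fun k _ => hgpos k
  have hc0le : ∀ k ∈ Finset.range (N+1), c0 ≤ g k := fun k hk => Finset.inf'_le _ hk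
  refine ⟨c0 / 2, by positivity, fun k => ?_⟩
  by_cases hk : k ≤ N
  · by_cases h0 : qPoch q z k = 0
    · exact Or.inl h0
    · right
      have := hc0le k (Finset.mem_range.2 (Nat.lt_succ_of_le hk))
      rw [hg] at this; simp only [h0, if_false] at this
      linarith
  · push_neg at hk
    have hsplit : qPoch q z k = qPoch q z N * qPoch q w (k - N) := by
      conv_lhs => rw [show k = N + (k - N) by omega]
      exact qPoch_add q z N (k - N)
    by_cases h0 : qPoch q z N = 0
    · exact Or.inl (by rw [hsplit, h0, zero_mul])
    · right
      have hN' := hc0le N (Finset.mem_range.2 (Nat.lt_succ_self N))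
      rw [hg] at hN'; simp only [h0, if_false] at hN'
      rw [hsplit, norm_mul]
      have h := mul_le_mul hN' (hwhalf (k - N)) (by norm_num) (norm_nonneg _)
      linarith

theorem stmt13 (q p a b c d x y : ℂ)
    (hq0 : 0 < ‖q‖) (hq1 : ‖q‖ < 1)
    (hp0 : 0 < ‖p‖) (hp1 : ‖p‖ < 1)
    (hx : ‖x‖ < 1) (hy : ‖y‖ < 1) :
    Psi1 q p (q ^ a) (p ^ b) (p ^ c) (q ^ d) x y =
      ∑' l : ℕ, qPoch q (q ^ a) l * qPoch p (p ^ b) l /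
          (qPoch p (p ^ c) l * qPoch p p l) * y ^ l *
          phi21 q (q ^ (a + (l : ℂ))) 0 (q ^ d) x := by
  have hq : q ≠ 0 := by
    intro h; rw [h] at hq0; simp at hq0
  set A : ℂ := q ^ a with hA
  set B : ℂ := p ^ b with hB
  set C : ℂ := p ^ c with hC'
  set D : ℂ := q ^ d with hD'
  set F : ℕ × ℕ → ℂ := fun kl =>
    qPoch q A (kl.1 + kl.2) * qPoch p B kl.2 /
      (qPoch p C kl.2 * qPoch q D kl.1 * qPoch q q kl.1 * qPoch p p kl.2) *
      x ^ kl.1 * y ^ kl.2 with hF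
  obtain ⟨MA, hMA0, hMA⟩ := qPoch_upper q A hq1
  obtain ⟨MB, hMB0, hMB⟩ := qPoch_upper p B hp1
  obtain ⟨cC, hcC, hCl⟩ := qPoch_lower p C hp1
  obtain ⟨cD, hcD, hDl⟩ := qPoch_lower q D hq1
  obtain ⟨cQ, hcQ, hQl⟩ := qPoch_lower q q hq1
  obtain ⟨cP, hcP, hPl⟩ := qPoch_lower p p hp1
  set K : ℝ := MA * MB / (cC * cD * cQ * cP) with hK
  have hK0 : 0 ≤ K := div_nonneg (mul_nonneg hMA0 hMB0) (by positivity)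
  have hbound : ∀ kl : ℕ × ℕ,
      ‖F kl‖ ≤ K * ‖x‖ ^ kl.1 * ‖y‖ ^ kl.2 := by
    rintro ⟨k, l⟩
    by_cases hden : qPoch p C l * qPoch q D k * qPoch q q k * qPoch p p l = 0
    · have : F (k, l) = 0 := by
        simp only [hF, hden, div_zero, zero_mul]
      rw [this, norm_zero]
      positivity
    · have h1 : qPoch p C l ≠ 0 := fun h => hden (by rw [h]; ring)
      have h2 : qPoch q D k ≠ 0 := fun h => hden (by rw [h]; ring)
      have h3 : qPoch q q k ≠ 0 := fun h => hden (by rw [h]; ring)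
      have h4 : qPoch p p l ≠ 0 := fun h => hden (by rw [h]; ring)
      have lC := (hCl l).resolve_left h1
      have lD := (hDl k).resolve_left h2
      have lQ := (hQl k).resolve_left h3
      have lP := (hPl l).resolve_left h4
      have hnum : ‖qPoch q A (k + l) * qPoch p B l‖ ≤ MA * MB := by
        rw [norm_mul]
        exact mul_le_mul (hMA _) (hMB _) (norm_nonneg _) hMA0
      have hdenlb : cC * cD * cQ * cP ≤
          ‖qPoch p C l * qPoch q D k * qPoch q q k * qPoch p p l‖ := by
        rw [norm_mul, norm_mul, norm_mul]
        gcongr <;> positivity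
      have hdiv : ‖qPoch q A (k + l) * qPoch p B l‖ /
          ‖qPoch p C l * qPoch q D k * qPoch q q k * qPoch p p l‖ ≤ K :=
        div_le_div₀ (mul_nonneg hMA0 hMB0) hnum (by positivity) hdenlb
      have hnorm : ‖F (k, l)‖ = ‖qPoch q A (k + l) * qPoch p B l‖ /
          ‖qPoch p C l * qPoch q D k * qPoch q q k * qPoch p p l‖ *
          ‖x‖ ^ k * ‖y‖ ^ l := by
        simp [hF, norm_mul, norm_div, norm_pow]
      rw [hnorm]
      have hx0 : (0:ℝ) ≤ ‖x‖ ^ k := pow_nonneg (norm_nonneg _) _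
      have hy0 : (0:ℝ) ≤ ‖y‖ ^ l := pow_nonneg (norm_nonneg _) _
      exact mul_le_mul_of_nonneg_right (mul_le_mul_of_nonneg_right hdiv hx0) hy0
  have hgs : Summable (fun kl : ℕ × ℕ => K * ‖x‖ ^ kl.1 * ‖y‖ ^ kl.2) := by
    have h := Summable.mul_of_nonneg
      ((summable_geometric_of_lt_one (norm_nonneg _) hx).mul_left K)
      (summable_geometric_of_lt_one (norm_nonneg _) hy)
      (fun k => mul_nonneg hK0 (pow_nonneg (norm_nonneg _) _))
      (fun l => pow_nonneg (norm_nonneg _) _)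
    exact h
  have hFs : Summable F := Summable.of_norm_bounded hgs hbound
  have hFs' : Summable (fun lk : ℕ × ℕ => F lk.swap) := hFs.prod_symm
  have step1 : Psi1 q p A B C D x y = ∑' lk : ℕ × ℕ, F lk.swap :=
    ((Equiv.prodComm ℕ ℕ).tsum_eq F).symm
  rw [step1, Summable.tsum_prod' hFs' (fun l => hFs'.prod_factor l)]
  refine tsum_congr fun l => ?_
  have hcl : q ^ (a + (l : ℂ)) = A * q ^ l := by
    rw [hA, ← Complex.cpow_natCast q l, ← Complex.cpow_add _ _ hq]
  rw [phi21, hcl, ← tsum_mul_left]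
  refine tsum_congr fun k => ?_
  have hsplit : qPoch q A (k + l) = qPoch q A l * qPoch q (A * q ^ l) k := by
    rw [add_comm, qPoch_add]
  simp only [hF, Prod.swap_prod_mk, hsplit, qPoch_zero]
  ring
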